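/- (Continuation Principle for Hypergraphs) For every hypergraph H and vertex sets A, B with A ⊆ B ⊆ V(H), one has γ_g(H|A) ≥ γ_g(H|B). -/

import Mathlib

attribute [local instance 10] Classical.propDecidable

variable {V : Type}

/-- The closed neighborhood of a vertex in a hypergraph given by its edge set. -/
noncomputable def closedNbhd [Fintype V] (H : Finset (Finset V)) (v : V) : Finset V :=
  Finset.univ.filter (fun u => u = v ∨ ∃ e ∈ H, u ∈ e ∧ v ∈ e)

private lemma card_sdiff_union_lt [Fintype V] {S T : Finset V} (h : ¬ T ⊆ S) :
    (Finset.univ \ (S ∪ T)).card < (Finset.univ \ S).card := by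
  classical
  obtain ⟨u, huT, huS⟩ := Finset.not_subset.mp h
  apply Finset.card_lt_card
  rw [Finset.ssubset_def]
  constructor
  · exact Finset.sdiff_subset_sdiff (Finset.Subset.refl _) Finset.subset_union_left
  · intro hc
    have hu : u ∈ Finset.univ \ S := by simp [huS]
    have := hc hu
    simp [huT] at this

/-- Value of the domination game on a hypergraph: `S` is the set of vertices already
dominated, `dom = true` iff Dominator is the next player to move.  A legal move is a vertex
dominating at least one new vertex; Dominator minimizes, Staller maximizes the total
number of moves, and both play optimally. -/
noncomputable def domGameVal [Fintype V] (H : Finset (Finset V)) (dom : Bool) (S : Finset V) :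
    ℕ :=
  if h : (Finset.univ.filter fun v => ¬ closedNbhd H v ⊆ S).Nonempty then
    1 + (if dom then
        (Finset.univ.filter fun v => ¬ closedNbhd H v ⊆ S).attach.inf'
          (Finset.attach_nonempty_iff.mpr h)
          (fun v => domGameVal H false (S ∪ closedNbhd H v.1))
      else
        (Finset.univ.filter fun v => ¬ closedNbhd H v ⊆ S).attach.sup'
          (Finset.attach_nonempty_iff.mpr h)
          (fun v => domGameVal H true (S ∪ closedNbhd H v.1)))
  else 0
termination_by (Finset.univ \ S).card
decreasing_by
  · exact card_sdiff_union_lt (Finset.mem_filter.mp v.2).2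
  · exact card_sdiff_union_lt (Finset.mem_filter.mp v.2).2

/-- The game domination number (Dominator starts). -/
noncomputable def gammaGame [Fintype V] (H : Finset (Finset V)) : ℕ :=
  domGameVal H true ∅

/-- Continuation Principle for Hypergraphs: if `A ⊆ B` are vertex sets of a
hypergraph `H`, then `γ_g(H|A) ≥ γ_g(H|B)` for the residual Dominator-start games. -/
private lemma key [Fintype V] (H : Finset (Finset V)) :
    ∀ n (A B : Finset V), (Finset.univ \ A).card = n → A ⊆ B → ∀ dom : Bool,
      domGameVal H dom B ≤ domGameVal H dom A := by
  intro n
  induction n using Nat.strong_induction_on with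
  | _ n IH =>
    intro A B hn hAB dom
    by_cases hB : (Finset.univ.filter fun v => ¬ closedNbhd H v ⊆ B).Nonempty
    · have hA : (Finset.univ.filter fun v => ¬ closedNbhd H v ⊆ A).Nonempty := by
        obtain ⟨v, hv⟩ := hB
        rw [Finset.mem_filter] at hv
        exact ⟨v, Finset.mem_filter.mpr ⟨Finset.mem_univ v, fun h => hv.2 (h.trans hAB)⟩⟩
      cases dom with
      | true =>
        obtain ⟨w, hw, hweq⟩ := Finset.exists_mem_eq_inf'
          (Finset.attach_nonempty_iff.mpr hA)
          (fun v => domGameVal H false (A ∪ closedNbhd H v.1))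
        have hwA : ¬ closedNbhd H w.1 ⊆ A := (Finset.mem_filter.mp w.2).2
        rw [domGameVal, dif_pos hB, domGameVal, dif_pos hA]
        simp only [if_true, hweq]
        apply Nat.add_le_add_left
        by_cases hwB : closedNbhd H w.1 ⊆ B
        · -- w is illegal in the B-game; play any legal B-move instead
          obtain ⟨v0, hv0⟩ := id hB
          calc (Finset.univ.filter fun v => ¬ closedNbhd H v ⊆ B).attach.inf'
                (Finset.attach_nonempty_iff.mpr hB)
                (fun v => domGameVal H false (B ∪ closedNbhd H v.1))
              ≤ domGameVal H false (B ∪ closedNbhd H v0) :=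
                Finset.inf'_le _ (Finset.mem_attach _ ⟨v0, hv0⟩)
            _ ≤ domGameVal H false (A ∪ closedNbhd H w.1) := by
                refine IH _ (hn ▸ card_sdiff_union_lt hwA) _ _ rfl ?_ false
                exact Finset.union_subset (hAB.trans Finset.subset_union_left)
                  (hwB.trans Finset.subset_union_left)
        · have hmem : w.1 ∈ Finset.univ.filter fun v => ¬ closedNbhd H v ⊆ B :=
            Finset.mem_filter.mpr ⟨Finset.mem_univ _, hwB⟩
          calc (Finset.univ.filter fun v => ¬ closedNbhd H v ⊆ B).attach.inf'
                (Finset.attach_nonempty_iff.mpr hB)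
                (fun v => domGameVal H false (B ∪ closedNbhd H v.1))
              ≤ domGameVal H false (B ∪ closedNbhd H w.1) :=
                Finset.inf'_le _ (Finset.mem_attach _ ⟨w.1, hmem⟩)
            _ ≤ domGameVal H false (A ∪ closedNbhd H w.1) :=
                IH _ (hn ▸ card_sdiff_union_lt hwA) _ _ rfl
                  (Finset.union_subset_union hAB (le_refl _)) false
      | false =>
        obtain ⟨v, hv, hveq⟩ := Finset.exists_mem_eq_sup'
          (Finset.attach_nonempty_iff.mpr hB)
          (fun v => domGameVal H true (B ∪ closedNbhd H v.1))
        have hvB : ¬ closedNbhd H v.1 ⊆ B := (Finset.mem_filter.mp v.2).2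
        have hvA : ¬ closedNbhd H v.1 ⊆ A := fun h => hvB (h.trans hAB)
        have hmem : v.1 ∈ Finset.univ.filter fun u => ¬ closedNbhd H u ⊆ A :=
          Finset.mem_filter.mpr ⟨Finset.mem_univ _, hvA⟩
        rw [domGameVal, dif_pos hB, domGameVal, dif_pos hA]
        simp only [Bool.false_eq_true, if_false, hveq]
        apply Nat.add_le_add_left
        calc domGameVal H true (B ∪ closedNbhd H v.1)
            ≤ domGameVal H true (A ∪ closedNbhd H v.1) :=
              IH _ (hn ▸ card_sdiff_union_lt hvA) _ _ rfl
                (Finset.union_subset_union hAB (le_refl _)) true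
          _ ≤ _ := Finset.le_sup' (fun u => domGameVal H true (A ∪ closedNbhd H u.1))
              (Finset.mem_attach _ ⟨v.1, hmem⟩)
    · rw [domGameVal, dif_neg hB]
      exact Nat.zero_le _

theorem stmt_6 (V : Type) [Fintype V] (H : Finset (Finset V)) (A B : Finset V)
    (hAB : A ⊆ B) :
    domGameVal H true B ≤ domGameVal H true A :=
  key H _ A B rfl hAB true
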